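/- Let φ be a self-map of T. The composition operator C_φ, defined by C_φ f = f ∘ φ, is a bounded operator from Lμ(T) to Lμ(T) if and only if sup_{v∈T} μ(v)/μ(φ(v)) < ∞; moreover, in that case the operator norm of C_φ equals sup_{v∈T} μ(v)/μ(φ(v)). -/

import Mathlib

open Filter Set Topology

/-- The weighted sup-norm `‖f‖_μ = sup_{v ∈ T} μ(v) |f(v)|`. -/
noncomputable def wnorm {T : Type*} (μ : T → ℝ) (f : T → ℂ) : ℝ :=
  ⨆ v : T, μ v * ‖f v‖

/-- Membership in the weighted Banach space `Lμ(T)`: `sup_{v} μ(v)|f(v)| < ∞`. -/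
def memL {T : Type*} (μ : T → ℝ) (f : T → ℂ) : Prop :=
  BddAbove (Set.range fun v : T => μ v * ‖f v‖)

/-- The composition operator `C_φ f = f ∘ φ` is a bounded operator on `Lμ(T)`
if and only if `sup_{v∈T} μ(v)/μ(φ(v)) < ∞`; moreover, in that case its operator norm
equals `sup_{v∈T} μ(v)/μ(φ(v))`. -/
theorem stmt_5 {T : Type*} [MetricSpace T] (o : T)
    (hloc : ∀ M : ℝ, {v : T | dist o v ≤ M}.Finite)
    (hunb : ∀ M : ℝ, ∃ v : T, M < dist o v)
    (μ : T → ℝ) (hμ : ∀ v : T, 0 < μ v) (φ : T → T) :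
    (((∀ f : T → ℂ, memL μ f → memL μ (f ∘ φ)) ∧
        ∃ C : ℝ, ∀ f : T → ℂ, memL μ f → wnorm μ (f ∘ φ) ≤ C * wnorm μ f) ↔
      BddAbove (Set.range fun v : T => μ v / μ (φ v))) ∧
    (BddAbove (Set.range fun v : T => μ v / μ (φ v)) →
      sInf {C : ℝ | 0 ≤ C ∧ ∀ f : T → ℂ, memL μ f → wnorm μ (f ∘ φ) ≤ C * wnorm μ f}
        = ⨆ v : T, μ v / μ (φ v)) := by
  classical
  have hT : Nonempty T := ⟨o⟩
  -- values of the delta test function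
  have hval : ∀ w v : T, μ v * ‖(if v = w then ((μ w)⁻¹ : ℂ) else 0)‖ =
      if v = w then 1 else 0 := by
    intro w v
    by_cases h : v = w
    · subst h
      simp [Complex.norm_real, Real.norm_eq_abs, abs_of_pos (inv_pos.2 (hμ v)),
        mul_inv_cancel₀ (hμ v).ne', abs_of_pos (hμ v)]
    · simp [h]
  have hmemδ : ∀ w : T, memL μ (fun v => if v = w then ((μ w)⁻¹ : ℂ) else 0) := by
    intro w
    refine ⟨1, ?_⟩
    rintro x ⟨v, rfl⟩
    simp only [hval]
    split <;> norm_num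
  have hwδ : ∀ w : T, wnorm μ (fun v => if v = w then ((μ w)⁻¹ : ℂ) else 0) = 1 := by
    intro w
    refine le_antisymm (ciSup_le fun v => ?_) ?_
    · rw [hval]; split <;> norm_num
    · have := le_ciSup (hmemδ w) w
      rwa [hval, if_pos rfl] at this
  -- key: from boundedness hypothesis, each μ v / μ (φ v) is ≤ C
  have hkey : ∀ C : ℝ, (∀ f : T → ℂ, memL μ f → memL μ (f ∘ φ)) →
      (∀ f : T → ℂ, memL μ f → wnorm μ (f ∘ φ) ≤ C * wnorm μ f) →
      ∀ v : T, μ v / μ (φ v) ≤ C := by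
    intro C hcomp hbdd v
    set f : T → ℂ := fun u => if u = φ v then ((μ (φ v))⁻¹ : ℂ) else 0 with hf
    have h1 : wnorm μ (f ∘ φ) ≤ C := by
      have := hbdd f (hmemδ (φ v))
      rwa [hwδ (φ v), mul_one] at this
    have hcv : μ v * ‖(f ∘ φ) v‖ = μ v / μ (φ v) := by
      simp [hf, Complex.norm_real, Real.norm_eq_abs,
        abs_of_pos (inv_pos.2 (hμ (φ v))), div_eq_mul_inv, abs_of_pos (hμ (φ v)), (hμ (φ v)).le]
    have h2 := le_ciSup (hcomp f (hmemδ (φ v))) v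
    rw [hcv] at h2
    exact h2.trans h1
  -- key: pointwise estimate in the reverse direction
  have hpoint : ∀ (f : T → ℂ) (v : T), memL μ f →
      BddAbove (Set.range fun v : T => μ v / μ (φ v)) →
      μ v * ‖(f ∘ φ) v‖ ≤ (⨆ v : T, μ v / μ (φ v)) * wnorm μ f := by
    intro f v hf hB
    have hid : μ v * ‖(f ∘ φ) v‖ = (μ v / μ (φ v)) * (μ (φ v) * ‖f (φ v)‖) := by
      field_simp [(hμ (φ v)).ne']
      rfl
    rw [hid]
    have h1 : μ v / μ (φ v) ≤ ⨆ v : T, μ v / μ (φ v) := le_ciSup hB v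
    have h2 : μ (φ v) * ‖f (φ v)‖ ≤ wnorm μ f := le_ciSup hf (φ v)
    exact mul_le_mul h1 h2 (mul_nonneg (hμ _).le (norm_nonneg _)) ((div_pos (hμ v) (hμ (φ v))).le.trans h1)
  have hSnn : BddAbove (Set.range fun v : T => μ v / μ (φ v)) →
      0 ≤ ⨆ v : T, μ v / μ (φ v) := fun hB =>
    (div_pos (hμ o) (hμ (φ o))).le.trans (le_ciSup hB o)
  -- backward direction pieces
  have hback : BddAbove (Set.range fun v : T => μ v / μ (φ v)) →
      (∀ f : T → ℂ, memL μ f → memL μ (f ∘ φ)) ∧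
      (∀ f : T → ℂ, memL μ f →
        wnorm μ (f ∘ φ) ≤ (⨆ v : T, μ v / μ (φ v)) * wnorm μ f) := by
    intro hB
    constructor
    · intro f hf
      exact ⟨(⨆ v : T, μ v / μ (φ v)) * wnorm μ f, by
        rintro x ⟨v, rfl⟩; exact hpoint f v hf hB⟩
    · intro f hf
      exact ciSup_le fun v => hpoint f v hf hB
  constructor
  · constructor
    · rintro ⟨hcomp, C, hbdd⟩
      exact ⟨C, by rintro x ⟨v, rfl⟩; exact hkey C hcomp hbdd v⟩
    · intro hB
      exact ⟨(hback hB).1, ⟨_, (hback hB).2⟩⟩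
  · intro hB
    have hmem : (⨆ v : T, μ v / μ (φ v)) ∈
        {C : ℝ | 0 ≤ C ∧ ∀ f : T → ℂ, memL μ f → wnorm μ (f ∘ φ) ≤ C * wnorm μ f} :=
      ⟨hSnn hB, (hback hB).2⟩
    refine le_antisymm (csInf_le ⟨0, fun C hC => hC.1⟩ hmem) ?_
    refine le_csInf ⟨_, hmem⟩ ?_
    rintro C ⟨-, hC⟩
    exact ciSup_le (hkey C (hback hB).1 hC)
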